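/- arXiv:2604.13862 — 2 statements merged into one kernel-verified Lean document; each statement's English description precedes it below -/
import Mathlib

section
/- With P' ⊆ ℝ^d defined as in the nullspace projection and an axis-aligned interval [c − r, c + r] ⊇ P' (componentwise, with r ≥ 0), define the zonotope 𝒵 = {(ξ_p + Â^⊥ c) + Â^⊥ diag(r) β : ‖β‖_∞ ≤ 1}. Then every ξ ∈ ℝ^γ with Âξ = b̂ and ‖ξ‖_∞ ≤ 1 belongs to 𝒵. -/
open Matrix

/-- Lifting an interval over-approximation of the projected polytope back to
coefficient space: every feasible `ξ` (with `Âξ = b̂`, `‖ξ‖_∞ ≤ 1`) lies in the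
zonotope `𝒵 = ⟨ξ_p + Â^⊥ c, Â^⊥ diag(r)⟩`. -/
theorem interval_lift {q γ d : ℕ}
    (Ahat : Matrix (Fin q) (Fin γ) ℝ) (bhat : Fin q → ℝ)
    (ξp : Fin γ → ℝ) (Aperp : Matrix (Fin γ) (Fin d) ℝ)
    (c r : Fin d → ℝ)
    (hξp : Ahat.mulVec ξp = bhat)
    (hker : ∀ v : Fin γ → ℝ, Ahat.mulVec v = 0 ↔ ∃ x : Fin d → ℝ, v = Aperp.mulVec x)
    (hr : ∀ i, 0 ≤ r i)
    -- the box [c − r, c + r] contains the projected polytope P'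
    (hbox : ∀ x : Fin d → ℝ, (∀ i, |(ξp + Aperp.mulVec x) i| ≤ 1) →
        ∀ i, |x i - c i| ≤ r i) :
    ∀ ξ : Fin γ → ℝ, Ahat.mulVec ξ = bhat → (∀ i, |ξ i| ≤ 1) →
      ∃ βv : Fin d → ℝ, (∀ i, |βv i| ≤ 1) ∧
        ξ = (ξp + Aperp.mulVec c) + (Aperp * Matrix.diagonal r).mulVec βv := by

  intro ξ hξ hξ1
  have h0 : Ahat.mulVec (ξ - ξp) = 0 := by
    simp [Matrix.mulVec_sub, hξ, hξp]
  obtain ⟨x, hx⟩ := (hker (ξ - ξp)).1 h0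
  have hξeq : ξ = ξp + Aperp.mulVec x := by
    rw [← hx]; ring
  have hbx : ∀ i, |x i - c i| ≤ r i := by
    apply hbox
    intro i
    rw [← hξeq]
    exact hξ1 i
  refine ⟨fun i => if r i = 0 then 0 else (x i - c i) / r i, ?_, ?_⟩
  · intro i
    by_cases h : r i = 0
    · simp [h]
    · have hpos : 0 < r i := lt_of_le_of_ne (hr i) (Ne.symm h)
      simp only [h, if_false]
      rw [abs_div, abs_of_pos hpos, div_le_one hpos]
      exact hbx i
  · have hdiag : (Matrix.diagonal r).mulVec
        (fun i => if r i = 0 then 0 else (x i - c i) / r i) = x - c := by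
      funext i
      rw [Matrix.mulVec_diagonal]
      by_cases h : r i = 0
      · have := hbx i
        rw [h] at this
        have : x i - c i = 0 := abs_eq_zero.mp (le_antisymm this (abs_nonneg _))
        simp [h, this]
      · simp only [if_neg h, Pi.sub_apply]
        field_simp
    rw [← Matrix.mulVec_mulVec, hdiag, Matrix.mulVec_sub, hξeq]
    funext i
    simp
end

section
/- Let C_ℳ ∈ ℝ^{m×n} and G_ℳ^{(1)},…,G_ℳ^{(γ)} ∈ ℝ^{m×n} with γ_ℳ^{(j)} = ‖G_ℳ^{(j)}‖₂, and suppose C_ℳ has full row rank with SVD C_ℳ = U Σ Vᵀ. Let μ_ℳ^{(j)} = ‖Uᵀ G_ℳ^{(j)} V_⊥‖₂ and assume Σ_j γ_ℳ^{(j)} < σ_min(C_ℳ). Then for every η ∈ [−1,1]^γ, writing Ĉ = C_ℳ + Σ_j η^{(j)} G_ℳ^{(j)} and letting V̂ span the top-m right singular subspace of Ĉ, ‖sin Θ(V, V̂)‖₂ ≤ (Σ_{j=1}^γ μ_ℳ^{(j)}) / (σ_min(C_ℳ) − Σ_{j=1}^γ γ_ℳ^{(j)}). -/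
open Matrix

/-- Spectral norm (ℓ²-operator norm) of a real matrix. -/
noncomputable def specNorm {m n : ℕ} (M : Matrix (Fin m) (Fin n) ℝ) : ℝ :=
  ‖LinearMap.toContinuousLinearMap (Matrix.toEuclideanLin M)‖

/-- Eigenvalues of a Hermitian matrix listed in decreasing order. -/
noncomputable def eigsDesc {n : ℕ} (A : Matrix (Fin n) (Fin n) ℝ) (hA : A.IsHermitian) :
    Fin n → ℝ :=
  fun i => (hA.eigenvalues ∘ Tuple.sort hA.eigenvalues) i.rev

/-- The `i`-th largest singular value of a real matrix. -/
noncomputable def singularValue {m n : ℕ} (M : Matrix (Fin m) (Fin n) ℝ)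
    (i : Fin (min m n)) : ℝ :=
  Real.sqrt (eigsDesc (Mᴴ * M) (Matrix.isHermitian_conjTranspose_mul_self M)
    ⟨i.1, lt_of_lt_of_le i.2 (Nat.min_le_right m n)⟩)

/-- The smallest singular value of a real matrix. -/
noncomputable def sigmaMin {m n : ℕ} (M : Matrix (Fin m) (Fin n) ℝ) : ℝ :=
  ⨅ i : Fin (min m n), singularValue M i

open scoped Matrix.Norms.L2Operator
open Polynomial

set_option maxHeartbeats 1600000

namespace NMZ

lemma specNorm_eq {m n : ℕ} (M : Matrix (Fin m) (Fin n) ℝ) : specNorm M = ‖M‖ := rfl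

lemma matrix_norm_one_le {k : ℕ} : ‖(1 : Matrix (Fin k) (Fin k) ℝ)‖ ≤ 1 := by
  rw [Matrix.cstar_norm_def, _root_.map_one]
  exact ContinuousLinearMap.norm_id_le

lemma matrix_norm_one {k : ℕ} (hk : 0 < k) : ‖(1 : Matrix (Fin k) (Fin k) ℝ)‖ = 1 := by
  rw [Matrix.cstar_norm_def, _root_.map_one]
  haveI : Nonempty (Fin k) := ⟨⟨0, hk⟩⟩
  exact ContinuousLinearMap.norm_id

lemma norm_transpose {p q : ℕ} (A : Matrix (Fin p) (Fin q) ℝ) : ‖Aᵀ‖ = ‖A‖ := by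
  rw [← conjTranspose_eq_transpose_of_trivial]
  exact Matrix.l2_opNorm_conjTranspose A

lemma norm_sq {p q : ℕ} (A : Matrix (Fin p) (Fin q) ℝ) : ‖Aᵀ * A‖ = ‖A‖ * ‖A‖ := by
  rw [← conjTranspose_eq_transpose_of_trivial]
  exact Matrix.l2_opNorm_conjTranspose_mul_self A

lemma norm_orth_le {p q : ℕ} (A : Matrix (Fin p) (Fin q) ℝ) (h : Aᵀ * A = 1) : ‖A‖ ≤ 1 := by
  have h1 : ‖A‖ * ‖A‖ ≤ 1 := by rw [← norm_sq, h]; exact matrix_norm_one_le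
  nlinarith [norm_nonneg A]

lemma norm_isometry_mul {p q r : ℕ} (A : Matrix (Fin p) (Fin q) ℝ) (h : Aᵀ * A = 1)
    (B : Matrix (Fin q) (Fin r) ℝ) : ‖A * B‖ = ‖B‖ := by
  have h1 : (A * B)ᵀ * (A * B) = Bᵀ * B := by
    rw [transpose_mul, Matrix.mul_assoc, ← Matrix.mul_assoc Aᵀ, h, Matrix.one_mul]
  have h2 := norm_sq (A * B)
  rw [h1, norm_sq] at h2
  nlinarith [norm_nonneg (A * B), norm_nonneg B]

lemma norm_orth_eq {p q : ℕ} (hq : 0 < q) (A : Matrix (Fin p) (Fin q) ℝ)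
    (h : Aᵀ * A = 1) : ‖A‖ = 1 := by
  have h1 : ‖A‖ * ‖A‖ = 1 := by rw [← norm_sq, h]; exact matrix_norm_one hq
  nlinarith [norm_nonneg A]

lemma norm_diagonal_le {k : ℕ} (w : Fin k → ℝ) (b : ℝ) (hb : 0 ≤ b) (hw : ∀ i, |w i| ≤ b) :
    ‖(diagonal w : Matrix (Fin k) (Fin k) ℝ)‖ ≤ b := by
  rw [Matrix.l2_opNorm_def]
  refine ContinuousLinearMap.opNorm_le_bound _ hb ?_
  intro x
  have hx : ∀ (y : EuclideanSpace ℝ (Fin k)), ‖y‖ = Real.sqrt (∑ i, (y i)^2) := by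
    intro y
    rw [EuclideanSpace.norm_eq]
    simp [Real.norm_eq_abs, sq_abs]
  have happ : ∀ i, ((LinearEquiv.trans Matrix.toEuclideanLin
      LinearMap.toContinuousLinearMap (diagonal w)) x) i = w i * x i := by
    intro i
    simp [LinearEquiv.trans_apply, Matrix.toEuclideanLin_apply, Matrix.mulVec_diagonal]
  calc ‖(LinearEquiv.trans Matrix.toEuclideanLin LinearMap.toContinuousLinearMap
        (diagonal w)) x‖
      = Real.sqrt (∑ i, (w i * x i)^2) := by
        rw [hx]; congr 1; exact Finset.sum_congr rfl fun i _ => by rw [happ]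
    _ ≤ Real.sqrt (∑ i, b^2 * (x i)^2) := by
        apply Real.sqrt_le_sqrt
        apply Finset.sum_le_sum
        intro i _
        have := hw i
        have h2 : (w i)^2 ≤ b^2 := by nlinarith [abs_nonneg (w i), neg_abs_le (w i), le_abs_self (w i)]
        nlinarith [sq_nonneg (x i)]
    _ = b * ‖x‖ := by
        rw [← Finset.mul_sum, Real.sqrt_mul (by positivity), hx, Real.sqrt_sq hb]

lemma norm_diagonal_mul_ge {k r : ℕ} (w : Fin k → ℝ) (c : ℝ) (hc : 0 < c)
    (hw : ∀ i, c ≤ |w i|) (B : Matrix (Fin k) (Fin r) ℝ) :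
    c * ‖B‖ ≤ ‖(diagonal w : Matrix (Fin k) (Fin k) ℝ) * B‖ := by
  have hw0 : ∀ i, w i ≠ 0 := fun i => by
    intro h; have := hw i; rw [h, abs_zero] at this; linarith
  have hinv : (diagonal (fun i => (w i)⁻¹) : Matrix (Fin k) (Fin k) ℝ) * (diagonal w * B) = B := by
    rw [← Matrix.mul_assoc, diagonal_mul_diagonal]
    have : (fun i => (w i)⁻¹ * w i) = fun _ => (1:ℝ) := by
      funext i; exact inv_mul_cancel₀ (hw0 i)
    rw [this, diagonal_one, Matrix.one_mul]
  have h1 : ‖B‖ ≤ c⁻¹ * ‖diagonal w * B‖ := by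
    calc ‖B‖ = ‖(diagonal (fun i => (w i)⁻¹) : Matrix (Fin k) (Fin k) ℝ) * (diagonal w * B)‖ := by
          rw [hinv]
      _ ≤ ‖(diagonal (fun i => (w i)⁻¹) : Matrix (Fin k) (Fin k) ℝ)‖ * ‖diagonal w * B‖ :=
          Matrix.l2_opNorm_mul _ _
      _ ≤ c⁻¹ * ‖diagonal w * B‖ := by
          apply mul_le_mul_of_nonneg_right _ (norm_nonneg _)
          apply norm_diagonal_le
          · positivity
          · intro i
            rw [abs_inv]
            exact inv_anti₀ hc (hw i)
  calc c * ‖B‖ ≤ c * (c⁻¹ * ‖diagonal w * B‖) := by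
        apply mul_le_mul_of_nonneg_left h1 (le_of_lt hc)
    _ = ‖diagonal w * B‖ := by field_simp


lemma charpoly_conj {N : ℕ} (W D : Matrix (Fin N) (Fin N) ℝ)
    (h2 : W * Wᵀ = 1) (hdet : Wᵀ.det * W.det = 1) :
    (W * D * Wᵀ).charpoly = D.charpoly := by
  classical
  have hmap : ∀ (M : Matrix (Fin N) (Fin N) ℝ), (M.map (C : ℝ → ℝ[X])) =
      (C : ℝ →+* ℝ[X]).mapMatrix M := fun M => rfl
  set Wc : Matrix (Fin N) (Fin N) ℝ[X] := W.map (C : ℝ → ℝ[X]) with hWc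
  have hWcT : Wᵀ.map (C : ℝ → ℝ[X]) = Wcᵀ := by
    rw [hWc]; ext i j; simp [Matrix.map_apply]
  have hone : Wc * Wcᵀ = 1 := by
    rw [hWc, ← hWcT, hmap, hmap, ← _root_.map_mul, h2, _root_.map_one]
  have hchar : (W * D * Wᵀ).charmatrix = Wc * D.charmatrix * Wcᵀ := by
    rw [charmatrix]
    rw [charmatrix]
    rw [Matrix.mul_sub, Matrix.sub_mul]
    congr 1
    · -- Wc * scalar X * Wcᵀ = scalar X
      rw [Matrix.mul_assoc]
      rw [scalar_commute X (fun r => Commute.all _ _) _]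
      rw [← Matrix.mul_assoc, hone, Matrix.one_mul]
    · simp only [_root_.map_mul, ← hmap]
      rw [Matrix.map_mul, Matrix.map_mul, hWcT]
  rw [Matrix.charpoly, hchar, Matrix.charpoly]
  rw [det_mul, det_mul]
  have hdetc : Wcᵀ.det * Wc.det = 1 := by
    have : Wcᵀ.det = C (Wᵀ.det) := by rw [← hWcT, hmap, ← RingHom.map_det]
    have h2' : Wc.det = C (W.det) := by rw [hWc, hmap, ← RingHom.map_det]
    rw [this, h2', ← _root_.map_mul, hdet, _root_.map_one]
  calc Wc.det * D.charmatrix.det * Wcᵀ.det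
      = (Wcᵀ.det * Wc.det) * D.charmatrix.det := by ring
    _ = D.charmatrix.det := by rw [hdetc, one_mul]

lemma charpoly_diagonal {N : ℕ} (w : Fin N → ℝ) :
    (diagonal w : Matrix (Fin N) (Fin N) ℝ).charpoly = ∏ i, (X - C (w i)) := by
  classical
  have : (diagonal w : Matrix (Fin N) (Fin N) ℝ).charmatrix =
      diagonal (fun i => (X : ℝ[X]) - C (w i)) := by
    apply Matrix.ext; intro i j
    by_cases h : i = j
    · subst h; rw [charmatrix_apply_eq, diagonal_apply_eq, diagonal_apply_eq]
    · rw [charmatrix_apply_ne _ _ _ h, diagonal_apply_ne _ h, diagonal_apply_ne _ h, map_zero,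
        neg_zero]
  rw [Matrix.charpoly, this, det_diagonal]

lemma eig_multiset {N : ℕ} (A : Matrix (Fin N) (Fin N) ℝ) (hA : A.IsHermitian)
    (w : Fin N → ℝ) (W : Matrix (Fin N) (Fin N) ℝ)
    (h1 : Wᵀ * W = 1) (h2 : W * Wᵀ = 1)
    (hAW : A = W * diagonal w * Wᵀ) :
    Multiset.map hA.eigenvalues Finset.univ.val = Multiset.map w Finset.univ.val := by
  classical
  have hdet : ∀ (M : Matrix (Fin N) (Fin N) ℝ), Mᵀ * M = 1 → Mᵀ.det * M.det = 1 := by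
    intro M h
    rw [← det_mul, h, det_one]
  have e1 : A.charpoly = ∏ i, (X - C (w i)) := by
    rw [hAW, charpoly_conj _ _ h2 (hdet W h1), charpoly_diagonal]
  have hspec := hA.spectral_theorem
  set U₀ : Matrix (Fin N) (Fin N) ℝ := (hA.eigenvectorUnitary : Matrix (Fin N) (Fin N) ℝ) with hU₀
  have hU₀mem := hA.eigenvectorUnitary.2
  rw [Matrix.mem_unitaryGroup_iff] at hU₀mem
  have hstar : star U₀ = U₀ᵀ := by
    rw [Matrix.star_eq_conjTranspose, conjTranspose_eq_transpose_of_trivial]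
  have h2' : U₀ * U₀ᵀ = 1 := by rw [← hstar]; exact hU₀mem
  have h1' : U₀ᵀ * U₀ = 1 := by
    have := hA.eigenvectorUnitary.2
    rw [Matrix.mem_unitaryGroup_iff'] at this
    rw [← hstar]; exact this
  have hdiag : (diagonal ((RCLike.ofReal : ℝ → ℝ) ∘ hA.eigenvalues) : Matrix (Fin N) (Fin N) ℝ)
      = diagonal hA.eigenvalues := by
    congr 1
  have e2 : A.charpoly = ∏ i, (X - C (hA.eigenvalues i)) := by
    conv_lhs => rw [hspec, Unitary.conjStarAlgAut_apply]
    rw [hstar, hdiag, charpoly_conj _ _ h2' (hdet U₀ h1'), charpoly_diagonal]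
  have eprod : (Multiset.map (fun a => X - C a) (Multiset.map hA.eigenvalues Finset.univ.val)).prod
      = (Multiset.map (fun a => X - C a) (Multiset.map w Finset.univ.val)).prod := by
    rw [Multiset.map_map, Multiset.map_map]
    have : ∀ (f : Fin N → ℝ), (Multiset.map ((fun a => X - C a) ∘ f) Finset.univ.val).prod
        = ∏ i, (X - C (f i)) := by
      intro f
      rfl
    rw [this, this, ← e1, ← e2]
  have := congrArg Polynomial.roots eprod
  rwa [Polynomial.roots_multiset_prod_X_sub_C, Polynomial.roots_multiset_prod_X_sub_C] at this


lemma sigmaMin_le_abs {m n : ℕ} (hm : 0 < m) (hmn : m ≤ n)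
    (CM : Matrix (Fin m) (Fin n) ℝ) (U : Matrix (Fin m) (Fin m) ℝ)
    (V : Matrix (Fin n) (Fin m) ℝ) (Vperp : Matrix (Fin n) (Fin (n - m)) ℝ)
    (d : Fin m → ℝ)
    (hCM : CM = U * diagonal d * Vᵀ)
    (hU : Uᵀ * U = 1) (hV : Vᵀ * V = 1) (hVVp : Vᵀ * Vperp = 0)
    (hVp : Vperpᵀ * Vperp = 1) (hcomplete : V * Vᵀ + Vperp * Vperpᵀ = 1)
    (hd : ∀ i, d i ≠ 0) (i₀ : Fin m) (hi₀ : ∀ i, |d i₀| ≤ |d i|) :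
    sigmaMin CM ≤ |d i₀| := by
  classical
  set A : Matrix (Fin n) (Fin n) ℝ := CMᴴ * CM with hAdef
  have hA : A.IsHermitian := Matrix.isHermitian_conjTranspose_mul_self CM
  have hms : m + (n - m) = n := by omega
  set eqv : Fin m ⊕ Fin (n - m) ≃ Fin n := finSumFinEquiv.trans (finCongr hms) with heqv
  set W₀ : Matrix (Fin n) (Fin m ⊕ Fin (n - m)) ℝ := fromCols V Vperp with hW₀
  set W : Matrix (Fin n) (Fin n) ℝ := W₀.submatrix (Equiv.refl (Fin n)) eqv.symm with hW
  set w : Fin n → ℝ := fun k => Sum.elim (fun i => d i * d i) (fun _ => (0:ℝ)) (eqv.symm k)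
    with hw
  have hVpV : Vperpᵀ * V = 0 := by
    have := congrArg Matrix.transpose hVVp
    rwa [transpose_mul, transpose_transpose, transpose_zero] at this
  have h10 : W₀ᵀ * W₀ = 1 := by
    rw [hW₀, transpose_fromCols, fromRows_mul_fromCols, hV, hVVp, hVpV, hVp,
      ← fromBlocks_one]
  have h20 : W₀ * W₀ᵀ = 1 := by
    rw [hW₀, transpose_fromCols, fromCols_mul_fromRows, hcomplete]
  have hWT : Wᵀ = W₀ᵀ.submatrix eqv.symm (Equiv.refl (Fin n)) := by
    rw [hW, transpose_submatrix]
  have h1 : Wᵀ * W = 1 := by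
    rw [hWT, hW, Matrix.submatrix_mul_equiv W₀ᵀ W₀ _ (Equiv.refl (Fin n)) _, h10,
      submatrix_one_equiv]
  have h2 : W * Wᵀ = 1 := by
    rw [hWT, hW, Matrix.submatrix_mul_equiv W₀ W₀ᵀ _ eqv.symm _, h20]
    rfl
  have hdiagw : (diagonal w : Matrix (Fin n) (Fin n) ℝ) =
      (fromBlocks (diagonal (fun i => d i * d i)) 0 0
        (0 : Matrix (Fin (n - m)) (Fin (n - m)) ℝ)).submatrix eqv.symm eqv.symm := by
    have : (0 : Matrix (Fin (n - m)) (Fin (n - m)) ℝ) = diagonal (fun _ => (0:ℝ)) := by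
      simp
    rw [this, fromBlocks_diagonal]
    ext k l
    by_cases h : k = l
    · subst h; simp [hw, Matrix.submatrix_apply, diagonal_apply_eq]
    · have h' : eqv.symm k ≠ eqv.symm l := fun hc => h (eqv.symm.injective hc)
      simp [Matrix.submatrix_apply, diagonal_apply_ne _ h, diagonal_apply_ne _ h']
  have hAW : A = W * diagonal w * Wᵀ := by
    have hform : A = V * diagonal (fun i => d i * d i) * Vᵀ := by
      rw [hAdef, conjTranspose_eq_transpose_of_trivial, hCM]
      rw [transpose_mul, transpose_mul, transpose_transpose, diagonal_transpose]
      simp only [Matrix.mul_assoc]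
      rw [← Matrix.mul_assoc Uᵀ U, hU, Matrix.one_mul, ← Matrix.mul_assoc (diagonal d),
        diagonal_mul_diagonal]
    rw [hform, hdiagw, hW, hWT]
    rw [Matrix.submatrix_mul_equiv W₀ _ _ eqv.symm _]
    rw [Matrix.submatrix_mul_equiv _ W₀ᵀ _ eqv.symm _]
    rw [hW₀, transpose_fromCols, fromCols_mul_fromBlocks, fromCols_mul_fromRows]
    simp [Matrix.mul_assoc]
  have hmult := eig_multiset A hA w W h1 h2 hAW
  set c : ℝ := d i₀ * d i₀ with hc
  have hcpos : 0 < c := mul_self_pos.mpr (hd i₀)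
  -- counting upper bound
  have hcountw : Multiset.countP (fun x => c < x) (Multiset.map w Finset.univ.val) ≤ m - 1 := by
    have huniv : Multiset.map (⇑eqv.symm) Finset.univ.val =
        (Finset.univ : Finset (Fin m ⊕ Fin (n - m))).val := by
      have := Finset.map_univ_equiv eqv.symm
      calc Multiset.map (⇑eqv.symm) Finset.univ.val
          = (Finset.univ.map eqv.symm.toEmbedding).val := by
            rw [Finset.map_val]; rfl
        _ = (Finset.univ : Finset (Fin m ⊕ Fin (n - m))).val := by rw [this]
    have : Multiset.map w Finset.univ.val =
        Multiset.map (Sum.elim (fun i => d i * d i) (fun _ => (0:ℝ)))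
          (Finset.univ : Finset (Fin m ⊕ Fin (n - m))).val := by
      rw [hw, ← huniv, Multiset.map_map]
      rfl
    rw [this]
    rw [Multiset.countP_map]
    have hsplit : (Finset.univ : Finset (Fin m ⊕ Fin (n - m))).val.filter
        (fun a => c < Sum.elim (fun i => d i * d i) (fun _ => (0:ℝ)) a) =
        ((Finset.univ : Finset (Fin m)).val.map Sum.inl).filter
          (fun a => c < Sum.elim (fun i => d i * d i) (fun _ => (0:ℝ)) a) +
        ((Finset.univ : Finset (Fin (n-m))).val.map Sum.inr).filter
          (fun a => c < Sum.elim (fun i => d i * d i) (fun _ => (0:ℝ)) a) := by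
      rw [← Multiset.filter_add]
      congr 1
    rw [hsplit]
    have hinr : ((Finset.univ : Finset (Fin (n-m))).val.map Sum.inr).filter
          (fun a => c < Sum.elim (fun i => d i * d i) (fun _ => (0:ℝ)) a) = 0 := by
      rw [Multiset.filter_map]
      have : (Finset.univ : Finset (Fin (n-m))).val.filter
          ((fun a => c < Sum.elim (fun i => d i * d i) (fun _ => (0:ℝ)) a) ∘ Sum.inr) = 0 := by
        apply Multiset.filter_eq_nil.mpr
        intro a _
        simp only [Function.comp, Sum.elim_inr, not_lt]
        exact le_of_lt hcpos
      rw [this, Multiset.map_zero]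
    rw [hinr, add_zero, Multiset.filter_map, Multiset.card_map]
    have hsub : Finset.univ.filter (fun i : Fin m =>
        c < Sum.elim (fun i => d i * d i) (fun _ => (0:ℝ)) (Sum.inl i : Fin m ⊕ Fin (n - m))) ⊆
        Finset.univ.erase i₀ := by
      intro i hi
      rw [Finset.mem_filter] at hi
      rw [Finset.mem_erase]
      refine ⟨?_, Finset.mem_univ _⟩
      intro hcon
      subst hcon
      simp only [Sum.elim_inl] at hi
      exact lt_irrefl _ hi.2
    have hcard := Finset.card_le_card hsub
    rw [Finset.card_erase_of_mem (Finset.mem_univ _), Finset.card_univ, Fintype.card_fin] at hcard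
    calc Multiset.card (Multiset.filter
          ((fun a => c < Sum.elim (fun i => d i * d i) (fun _ => (0:ℝ)) a) ∘ Sum.inl)
          Finset.univ.val)
        = (Finset.univ.filter (fun i : Fin m =>
            c < Sum.elim (fun i => d i * d i) (fun _ => (0:ℝ)) (Sum.inl i : Fin m ⊕ Fin (n - m)))).card := rfl
      _ ≤ m - 1 := hcard
  -- transfer to eigenvalues
  have hcounte : Multiset.countP (fun x => c < x)
      (Multiset.map hA.eigenvalues Finset.univ.val) ≤ m - 1 := by
    rw [hmult]; exact hcountw
  have hm1n : m - 1 < n := by omega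
  have hkey : eigsDesc A hA ⟨m - 1, hm1n⟩ ≤ c := by
    by_contra hcon
    push_neg at hcon
    have hmono := Tuple.monotone_sort hA.eigenvalues
    set φ : Fin m → Fin n :=
      fun i => (Tuple.sort hA.eigenvalues) (Fin.rev ⟨i.1, lt_of_lt_of_le i.2 hmn⟩) with hφdef
    have hφ : ∀ i : Fin m, c < hA.eigenvalues (φ i) := by
      intro i
      have hle : (⟨i.1, lt_of_lt_of_le i.2 hmn⟩ : Fin n) ≤ ⟨m - 1, hm1n⟩ := by
        simp only [Fin.mk_le_mk]
        omega
      have hrev : Fin.rev (⟨m - 1, hm1n⟩ : Fin n) ≤ Fin.rev ⟨i.1, lt_of_lt_of_le i.2 hmn⟩ :=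
        Fin.rev_le_rev.mpr hle
      have := hmono hrev
      calc c < eigsDesc A hA ⟨m - 1, hm1n⟩ := hcon
        _ ≤ (hA.eigenvalues ∘ Tuple.sort hA.eigenvalues) (Fin.rev ⟨i.1, _⟩) := this
        _ = hA.eigenvalues (φ i) := rfl
    have hinj : Function.Injective φ := by
      intro a b hab
      have h1 := (Tuple.sort hA.eigenvalues).injective hab
      have h2 := Fin.rev_injective h1
      exact Fin.ext (by simpa using h2)
    have hlow : m ≤ (Finset.univ.filter (fun k : Fin n => c < hA.eigenvalues k)).card := by
      have hmaps : ∀ i ∈ Finset.univ, φ i ∈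
          Finset.univ.filter (fun k : Fin n => c < hA.eigenvalues k) := by
        intro i _
        rw [Finset.mem_filter]
        exact ⟨Finset.mem_univ _, hφ i⟩
      have := Finset.card_le_card_of_injOn φ hmaps (fun a _ b _ h => hinj h)
      simpa using this
    have hup : (Finset.univ.filter (fun k : Fin n => c < hA.eigenvalues k)).card ≤ m - 1 := by
      rw [Multiset.countP_map] at hcounte
      exact hcounte
    omega
  -- conclude
  have hminmn : min m n = m := min_eq_left hmn
  have hm1mn : m - 1 < min m n := by omega
  have hbdd : BddBelow (Set.range fun i : Fin (min m n) => singularValue CM i) := by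
    refine ⟨0, ?_⟩
    rintro x ⟨i, rfl⟩
    exact Real.sqrt_nonneg _
  calc sigmaMin CM ≤ singularValue CM ⟨m - 1, hm1mn⟩ := ciInf_le hbdd _
    _ = Real.sqrt (eigsDesc A hA ⟨m - 1, hm1n⟩) := rfl
    _ ≤ Real.sqrt c := Real.sqrt_le_sqrt hkey
    _ = |d i₀| := Real.sqrt_mul_self_eq_abs _


end NMZ

open NMZ

/-- Worst-case Cai–Zhang bound for the nullspace matrix zonotope: for every
`η ∈ [−1,1]^γ` and every SVD `Ĉ = Û Ŝ V̂ᵀ` of the perturbed matrix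
`Ĉ = C_ℳ + Σⱼ η⁽ʲ⁾ G_ℳ⁽ʲ⁾`,
`‖sin Θ(V, V̂)‖₂ = ‖V⊥ᵀ V̂‖₂ ≤ (Σⱼ μ_ℳ⁽ʲ⁾)/(σ_min(C_ℳ) − Σⱼ γ_ℳ⁽ʲ⁾)`. -/
theorem nmz_worst_case_bound {m n γ : ℕ}
    (CM : Matrix (Fin m) (Fin n) ℝ) (G : Fin γ → Matrix (Fin m) (Fin n) ℝ)
    (U S : Matrix (Fin m) (Fin m) ℝ) (V : Matrix (Fin n) (Fin m) ℝ)
    (Vperp : Matrix (Fin n) (Fin (n - m)) ℝ)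
    -- SVD of the full-row-rank center C_ℳ
    (hCM : CM = U * S * Vᵀ)
    (hU : Uᵀ * U = 1) (hUo : U * Uᵀ = 1) (hV : Vᵀ * V = 1)
    (hS : ∃ dvec : Fin m → ℝ, S = Matrix.diagonal dvec)
    (hrank : CM.rank = m)
    -- V⊥ completes V to an orthonormal basis of ℝⁿ
    (hVVp : Vᵀ * Vperp = 0) (hVp : Vperpᵀ * Vperp = 1)
    (hcomplete : V * Vᵀ + Vperp * Vperpᵀ = 1)
    -- generator budget assumption Σⱼ γ_ℳ⁽ʲ⁾ < σ_min(C_ℳ)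
    (hbudget : ∑ j, specNorm (G j) < sigmaMin CM) :
    ∀ η : Fin γ → ℝ, (∀ j, |η j| ≤ 1) →
      ∀ (Uhat Shat : Matrix (Fin m) (Fin m) ℝ) (Vhat : Matrix (Fin n) (Fin m) ℝ),
        CM + ∑ j, η j • G j = Uhat * Shat * Vhatᵀ →
        Uhatᵀ * Uhat = 1 → Vhatᵀ * Vhat = 1 →
        (∃ dvec : Fin m → ℝ, Shat = Matrix.diagonal dvec ∧
            (∀ i, 0 ≤ dvec i) ∧ Antitone dvec) →
        specNorm (Vperpᵀ * Vhat) ≤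
          (∑ j, specNorm (Uᵀ * G j * Vperp)) /
            (sigmaMin CM - ∑ j, specNorm (G j)) := by
  classical
  intro η hη Uhat Shat Vhat hChat hUhatO hVhatO hShat
  obtain ⟨dh, hShd, hdh0, hdhanti⟩ := hShat
  obtain ⟨d, hSd⟩ := hS
  simp only [specNorm_eq] at hbudget ⊢
  rcases Nat.eq_zero_or_pos m with hm0 | hm
  · exfalso
    have hempty : IsEmpty (Fin (min m n)) := by
      rw [hm0]
      simp only [Nat.zero_min]
      exact Fin.isEmpty
    have h0 : sigmaMin CM = 0 := by
      rw [sigmaMin]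
      exact Real.iInf_of_isEmpty _
    have hsum : (0:ℝ) ≤ ∑ j, ‖G j‖ := Finset.sum_nonneg fun j _ => norm_nonneg _
    rw [h0] at hbudget
    linarith
  -- m > 0
  have hmn : m ≤ n := by
    have h1 := CM.rank_le_card_width
    rw [hrank] at h1
    simpa using h1
  have hCM' : CM = U * diagonal d * Vᵀ := by rw [hCM, hSd]
  have hVpV : Vperpᵀ * V = 0 := by
    have := congrArg Matrix.transpose hVVp
    rwa [transpose_mul, transpose_transpose, transpose_zero] at this
  -- d has no zero entries
  have hd : ∀ i, d i ≠ 0 := by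
    have h1 : CM.rank ≤ (diagonal d : Matrix (Fin m) (Fin m) ℝ).rank := by
      rw [hCM']
      exact le_trans (Matrix.rank_mul_le_left _ _) (Matrix.rank_mul_le_right U (diagonal d))
    rw [hrank, Matrix.rank_diagonal] at h1
    intro i hi
    rw [Fintype.card_subtype] at h1
    have hsub : Finset.univ.filter (fun j : Fin m => d j ≠ 0) ⊆ Finset.univ.erase i := by
      intro j hj
      rw [Finset.mem_filter] at hj
      rw [Finset.mem_erase]
      exact ⟨fun hji => hj.2 (hji ▸ hi), Finset.mem_univ _⟩
    have := Finset.card_le_card hsub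
    rw [Finset.card_erase_of_mem (Finset.mem_univ _), Finset.card_univ, Fintype.card_fin] at this
    omega
  set Z : Matrix (Fin m) (Fin n) ℝ := ∑ j, η j • G j with hZ
  have hZle : ‖Z‖ ≤ ∑ j, ‖G j‖ := by
    calc ‖Z‖ ≤ ∑ j, ‖η j • G j‖ := norm_sum_le _ _
      _ ≤ ∑ j, ‖G j‖ := by
          apply Finset.sum_le_sum
          intro j _
          rw [norm_smul, Real.norm_eq_abs]
          calc |η j| * ‖G j‖ ≤ 1 * ‖G j‖ :=
            mul_le_mul_of_nonneg_right (hη j) (norm_nonneg _)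
          _ = ‖G j‖ := one_mul _
  obtain ⟨i₁, -, hi₁⟩ := Finset.exists_min_image Finset.univ (fun i => |d i|)
    ⟨⟨0, hm⟩, Finset.mem_univ _⟩
  obtain ⟨i₂, -, hi₂⟩ := Finset.exists_min_image Finset.univ dh ⟨⟨0, hm⟩, Finset.mem_univ _⟩
  have hi₁' : ∀ i, |d i₁| ≤ |d i| := fun i => hi₁ i (Finset.mem_univ i)
  have hi₂' : ∀ i, dh i₂ ≤ dh i := fun i => hi₂ i (Finset.mem_univ i)
  have hsig : sigmaMin CM ≤ |d i₁| :=
    sigmaMin_le_abs hm hmn CM U V Vperp d hCM' hU hV hVVp hVp hcomplete hd i₁ hi₁'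
  set s : ℝ := dh i₂ with hs
  -- unit test vector as a column matrix
  set E : Matrix (Fin m) (Fin 1) ℝ := Matrix.of (fun i _ => if i = i₂ then (1:ℝ) else 0)
    with hE
  have hEE : Eᵀ * E = 1 := by
    ext a b
    have hab : a = b := Subsingleton.elim a b
    subst hab
    rw [Matrix.mul_apply, Matrix.one_apply_eq]
    simp only [hE, transpose_apply, Matrix.of_apply]
    rw [Finset.sum_congr rfl (fun i _ => by
      show (if i = i₂ then (1:ℝ) else 0) * (if i = i₂ then (1:ℝ) else 0) =
        if i = i₂ then (1:ℝ) else 0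
      by_cases h : i = i₂ <;> simp [h])]
    simp [Finset.sum_ite_eq']
  set X : Matrix (Fin m) (Fin 1) ℝ := Uhat * E with hX
  have hXX : Xᵀ * X = 1 := by
    rw [hX, transpose_mul, Matrix.mul_assoc, ← Matrix.mul_assoc Uhatᵀ, hUhatO,
      Matrix.one_mul, hEE]
  have hXnorm : ‖X‖ = 1 := norm_orth_eq one_pos X hXX
  have hUX : ‖Uᵀ * X‖ = 1 := by
    apply norm_orth_eq one_pos
    rw [transpose_mul, transpose_transpose, Matrix.mul_assoc, ← Matrix.mul_assoc U, hUo,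
      Matrix.one_mul, hXX]
  have hCt : CMᵀ * X = V * (diagonal d * (Uᵀ * X)) := by
    rw [hCM', transpose_mul, transpose_mul, transpose_transpose, diagonal_transpose]
    simp only [Matrix.mul_assoc]
  have hlow : |d i₁| ≤ ‖CMᵀ * X‖ := by
    have habs : 0 < |d i₁| := abs_pos.mpr (hd i₁)
    calc |d i₁| = |d i₁| * ‖Uᵀ * X‖ := by rw [hUX, mul_one]
      _ ≤ ‖diagonal d * (Uᵀ * X)‖ := norm_diagonal_mul_ge d _ habs hi₁' _
      _ = ‖V * (diagonal d * (Uᵀ * X))‖ := (norm_isometry_mul V hV _).symm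
      _ = ‖CMᵀ * X‖ := by rw [hCt]
  have hSE : Shat * E = dh i₂ • E := by
    rw [hShd]
    ext i j
    rw [Matrix.diagonal_mul, Matrix.smul_apply]
    simp only [hE, Matrix.of_apply]
    by_cases h : i = i₂ <;> simp [h]
  have hShatT : Shatᵀ = Shat := by rw [hShd, diagonal_transpose]
  have hChatX : (CM + Z)ᵀ * X = dh i₂ • (Vhat * E) := by
    rw [hChat, transpose_mul, transpose_mul, transpose_transpose, hShatT, hX]
    simp only [Matrix.mul_assoc]
    rw [← Matrix.mul_assoc Uhatᵀ Uhat, hUhatO, Matrix.one_mul, hSE, Matrix.mul_smul]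
  have hVhatE : ‖Vhat * E‖ = 1 := by
    rw [norm_isometry_mul Vhat hVhatO E]
    exact norm_orth_eq one_pos E hEE
  have hup : ‖(CM + Z)ᵀ * X‖ ≤ s := by
    rw [hChatX, norm_smul, Real.norm_eq_abs, hVhatE, mul_one, abs_of_nonneg (hdh0 i₂)]
  have hZX : ‖Zᵀ * X‖ ≤ ‖Z‖ := by
    calc ‖Zᵀ * X‖ ≤ ‖Zᵀ‖ * ‖X‖ := Matrix.l2_opNorm_mul _ _
      _ = ‖Z‖ := by rw [norm_transpose, hXnorm, mul_one]
  have hweyl : sigmaMin CM ≤ s + ‖Z‖ := by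
    have hsplit : CMᵀ * X = (CM + Z)ᵀ * X - Zᵀ * X := by
      rw [transpose_add, Matrix.add_mul]
      abel
    calc sigmaMin CM ≤ |d i₁| := hsig
      _ ≤ ‖CMᵀ * X‖ := hlow
      _ = ‖(CM + Z)ᵀ * X - Zᵀ * X‖ := by rw [hsplit]
      _ ≤ ‖(CM + Z)ᵀ * X‖ + ‖Zᵀ * X‖ := norm_sub_le _ _
      _ ≤ s + ‖Z‖ := add_le_add hup hZX
  set D : ℝ := sigmaMin CM - ∑ j, ‖G j‖ with hD
  have hDpos : 0 < D := by rw [hD]; linarith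
  have hDs : D ≤ s := by
    rw [hD]; linarith
  have hdhD : ∀ i, D ≤ dh i := fun i => le_trans hDs (hi₂' i)
  have hdhne : ∀ i, dh i ≠ 0 := fun i => ne_of_gt (lt_of_lt_of_le hDpos (hdhD i))
  -- the key identity
  have hSinv : Shat * diagonal (fun i => (dh i)⁻¹) = 1 := by
    rw [hShd, diagonal_mul_diagonal]
    have : (fun i => dh i * (dh i)⁻¹) = fun _ => (1:ℝ) := by
      funext i; exact mul_inv_cancel₀ (hdhne i)
    rw [this, diagonal_one]
  have hVpCM : Vperpᵀ * CMᵀ = 0 := by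
    rw [hCM', transpose_mul, transpose_mul, transpose_transpose, diagonal_transpose,
      ← Matrix.mul_assoc, hVpV]
    simp
  have hAeq : Vperpᵀ * Zᵀ * Uhat = Vperpᵀ * Vhat * Shat := by
    have h₁ : (CM + Z)ᵀ * Uhat = Vhat * Shat := by
      rw [hChat, transpose_mul, transpose_mul, transpose_transpose, hShatT]
      simp only [Matrix.mul_assoc]
      rw [hUhatO, Matrix.mul_one]
    have h₂ : Vperpᵀ * ((CMᵀ + Zᵀ) * Uhat) = Vperpᵀ * (Vhat * Shat) := by
      rw [← transpose_add, h₁]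
    have hexpand : Vperpᵀ * ((CMᵀ + Zᵀ) * Uhat) =
        Vperpᵀ * CMᵀ * Uhat + Vperpᵀ * Zᵀ * Uhat := by
      rw [Matrix.add_mul, Matrix.mul_add, ← Matrix.mul_assoc, ← Matrix.mul_assoc]
    rw [hexpand, hVpCM, Matrix.zero_mul, zero_add] at h₂
    rw [h₂, ← Matrix.mul_assoc]
  have hid : Vperpᵀ * Vhat = Vperpᵀ * Zᵀ * Uhat * diagonal (fun i => (dh i)⁻¹) := by
    have := congrArg (fun M => M * diagonal (fun i => (dh i)⁻¹)) hAeq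
    rw [Matrix.mul_assoc (Vperpᵀ * Vhat), hSinv, Matrix.mul_one] at this
    exact this.symm
  -- final estimate
  have hUtn : ‖Uᵀ‖ ≤ 1 := by
    apply norm_orth_le
    rw [transpose_transpose, hUo]
  have hUhn : ‖Uhat‖ ≤ 1 := norm_orth_le Uhat hUhatO
  have hSin : ‖(diagonal (fun i => (dh i)⁻¹) : Matrix (Fin m) (Fin m) ℝ)‖ ≤ D⁻¹ := by
    apply norm_diagonal_le _ _ (le_of_lt (inv_pos.mpr hDpos))
    intro i
    rw [abs_inv, abs_of_nonneg (hdh0 i)]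
    exact inv_anti₀ hDpos (hdhD i)
  have hZVp : ‖Vperpᵀ * Zᵀ * U‖ ≤ ∑ j, ‖Uᵀ * G j * Vperp‖ := by
    have htr : Vperpᵀ * Zᵀ * U = (Uᵀ * Z * Vperp)ᵀ := by
      simp only [Matrix.transpose_mul, Matrix.transpose_transpose, Matrix.mul_assoc]
    rw [htr, NMZ.norm_transpose]
    have hsum : Uᵀ * Z * Vperp = ∑ j, η j • (Uᵀ * G j * Vperp) := by
      rw [hZ, Matrix.mul_sum, Matrix.sum_mul]
      congr 1
      funext j
      rw [Matrix.mul_smul, Matrix.smul_mul]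
    rw [hsum]
    calc ‖∑ j, η j • (Uᵀ * G j * Vperp)‖ ≤ ∑ j, ‖η j • (Uᵀ * G j * Vperp)‖ :=
        norm_sum_le _ _
      _ ≤ ∑ j, ‖Uᵀ * G j * Vperp‖ := by
          apply Finset.sum_le_sum
          intro j _
          rw [norm_smul, Real.norm_eq_abs]
          calc |η j| * ‖Uᵀ * G j * Vperp‖ ≤ 1 * ‖Uᵀ * G j * Vperp‖ :=
            mul_le_mul_of_nonneg_right (hη j) (norm_nonneg _)
          _ = _ := one_mul _
  have hins : Vperpᵀ * Zᵀ * Uhat = (Vperpᵀ * Zᵀ * U) * (Uᵀ * Uhat) := by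
    conv_lhs => rw [← Matrix.one_mul Uhat, ← hUo]
    simp only [Matrix.mul_assoc]
  set N : ℝ := ∑ j, ‖Uᵀ * G j * Vperp‖ with hN
  have hNnn : 0 ≤ N := Finset.sum_nonneg fun j _ => norm_nonneg _
  have hfinal : ‖Vperpᵀ * Vhat‖ ≤ N * D⁻¹ := by
    rw [hid, hins]
    have h1 : ‖(Vperpᵀ * Zᵀ * U) * (Uᵀ * Uhat) * diagonal (fun i => (dh i)⁻¹)‖ ≤
        ‖(Vperpᵀ * Zᵀ * U) * (Uᵀ * Uhat)‖ * ‖(diagonal (fun i => (dh i)⁻¹) :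
          Matrix (Fin m) (Fin m) ℝ)‖ := Matrix.l2_opNorm_mul _ _
    have h2 : ‖(Vperpᵀ * Zᵀ * U) * (Uᵀ * Uhat)‖ ≤ N := by
      calc ‖(Vperpᵀ * Zᵀ * U) * (Uᵀ * Uhat)‖ ≤ ‖Vperpᵀ * Zᵀ * U‖ * ‖Uᵀ * Uhat‖ :=
          Matrix.l2_opNorm_mul _ _
        _ ≤ ‖Vperpᵀ * Zᵀ * U‖ * 1 := by
            apply mul_le_mul_of_nonneg_left _ (norm_nonneg _)
            calc ‖Uᵀ * Uhat‖ ≤ ‖Uᵀ‖ * ‖Uhat‖ := Matrix.l2_opNorm_mul _ _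
              _ ≤ 1 * 1 := mul_le_mul hUtn hUhn (norm_nonneg _) zero_le_one
              _ = 1 := one_mul _
        _ = ‖Vperpᵀ * Zᵀ * U‖ := mul_one _
        _ ≤ N := hZVp
    calc ‖(Vperpᵀ * Zᵀ * U) * (Uᵀ * Uhat) * diagonal (fun i => (dh i)⁻¹)‖
        ≤ ‖(Vperpᵀ * Zᵀ * U) * (Uᵀ * Uhat)‖ * ‖(diagonal (fun i => (dh i)⁻¹) :
          Matrix (Fin m) (Fin m) ℝ)‖ := h1
      _ ≤ N * D⁻¹ := by
          apply mul_le_mul h2 hSin (norm_nonneg _) hNnn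
  calc ‖Vperpᵀ * Vhat‖ ≤ N * D⁻¹ := hfinal
    _ = N / D := (div_eq_mul_inv _ _).symm
end
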